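/- For n ≥ 1, F̂_n - i·F̂_{n+1} - j·F̂_{n+2} - k·F̂_{n+3} = F̆_n + F̆_{n+2} + F̆_{n+4} + F̆_{n+6} = L̆_{n+1} + L̆_{n+5}, where F̂ denotes Fibonacci hybrid quaternions, F̆ Fibonacci hybrid numbers, and L̆ Lucas hybrid numbers. -/

import Mathlib

/-- A hybrid number over a ring `R`: `re + imI·𝐢 + imE·ε + imH·𝐡` with
`𝐢² = -1`, `ε² = 0`, `𝐡² = 1`, `𝐢ε = 1 - 𝐡`, `ε𝐢 = 1 + 𝐡`,
`𝐢𝐡 = ε + 𝐢`, `𝐡𝐢 = -ε - 𝐢`, `ε𝐡 = -ε`, `𝐡ε = ε`. -/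
@[ext]
structure Hybrid (R : Type*) where
  re : R
  imI : R
  imE : R
  imH : R

namespace Hybrid

variable {R : Type*} [Ring R]

instance : Zero (Hybrid R) := ⟨⟨0, 0, 0, 0⟩⟩
instance : One (Hybrid R) := ⟨⟨1, 0, 0, 0⟩⟩
instance : Add (Hybrid R) :=
  ⟨fun x y => ⟨x.re + y.re, x.imI + y.imI, x.imE + y.imE, x.imH + y.imH⟩⟩
instance : Neg (Hybrid R) := ⟨fun x => ⟨-x.re, -x.imI, -x.imE, -x.imH⟩⟩
instance : Sub (Hybrid R) :=
  ⟨fun x y => ⟨x.re - y.re, x.imI - y.imI, x.imE - y.imE, x.imH - y.imH⟩⟩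

/-- Multiplication of hybrid numbers, obtained by bilinear extension of the
multiplication table of the hybrid units (units commute with coefficients). -/
instance : Mul (Hybrid R) := ⟨fun x y =>
  ⟨x.re * y.re - x.imI * y.imI + x.imI * y.imE + x.imE * y.imI + x.imH * y.imH,
   x.re * y.imI + x.imI * y.re + x.imI * y.imH - x.imH * y.imI,
   x.re * y.imE + x.imE * y.re + x.imI * y.imH - x.imH * y.imI
     + x.imH * y.imE - x.imE * y.imH,
   x.re * y.imH + x.imH * y.re + x.imE * y.imI - x.imI * y.imE⟩⟩

instance {S : Type*} [SMul S R] : SMul S (Hybrid R) :=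
  ⟨fun s x => ⟨s • x.re, s • x.imI, s • x.imE, s • x.imH⟩⟩

/-- The hybrid unit `𝐢`. -/
def iu : Hybrid R := ⟨0, 1, 0, 0⟩
/-- The hybrid unit `ε`. -/
def eu : Hybrid R := ⟨0, 0, 1, 0⟩
/-- The hybrid unit `𝐡`. -/
def hu : Hybrid R := ⟨0, 0, 0, 1⟩

end Hybrid

noncomputable section

open Quaternion

/-- Hybrid quaternions: hybrid numbers with quaternion coefficients
(the quaternion units commute with the hybrid units). -/
abbrev HQ := Hybrid (ℍ[ℝ])

/-- The quaternion unit `i` in the hybrid quaternion algebra. -/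
def qi : HQ := ⟨⟨0, 1, 0, 0⟩, 0, 0, 0⟩
/-- The quaternion unit `j` in the hybrid quaternion algebra. -/
def qj : HQ := ⟨⟨0, 0, 1, 0⟩, 0, 0, 0⟩
/-- The quaternion unit `k` in the hybrid quaternion algebra. -/
def qk : HQ := ⟨⟨0, 0, 0, 1⟩, 0, 0, 0⟩

/-- Embedding of the real quaternions into the hybrid quaternions. -/
def eQ (q : ℍ[ℝ]) : HQ := ⟨q, 0, 0, 0⟩
/-- Embedding of the hybrid numbers into the hybrid quaternions. -/
def eH (z : Hybrid ℝ) : HQ :=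
  ⟨⟨z.re, 0, 0, 0⟩, ⟨z.imI, 0, 0, 0⟩, ⟨z.imE, 0, 0, 0⟩, ⟨z.imH, 0, 0, 0⟩⟩

/-- Fibonacci numbers, as real numbers. -/
def F (n : ℕ) : ℝ := Nat.fib n

/-- Lucas numbers, as real numbers. -/
def lucas : ℕ → ℝ
  | 0 => 2
  | 1 => 1
  | n + 2 => lucas (n + 1) + lucas n

/-- The Fibonacci quaternion `F̃ₘ = Fₘ + i F_{m+1} + j F_{m+2} + k F_{m+3}`. -/
def fq (m : ℕ) : ℍ[ℝ] := ⟨F m, F (m + 1), F (m + 2), F (m + 3)⟩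
/-- The Lucas quaternion `L̃ₘ`. -/
def lq (m : ℕ) : ℍ[ℝ] := ⟨lucas m, lucas (m + 1), lucas (m + 2), lucas (m + 3)⟩
/-- The Fibonacci hybrid number `F̆ₘ = Fₘ + 𝐢 F_{m+1} + ε F_{m+2} + 𝐡 F_{m+3}`. -/
def fh (m : ℕ) : Hybrid ℝ := ⟨F m, F (m + 1), F (m + 2), F (m + 3)⟩
/-- The Lucas hybrid number `L̆ₘ`. -/
def lh (m : ℕ) : Hybrid ℝ := ⟨lucas m, lucas (m + 1), lucas (m + 2), lucas (m + 3)⟩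
/-- The Fibonacci hybrid quaternion
`F̂ₙ = F̃ₙ + 𝐢 F̃_{n+1} + ε F̃_{n+2} + 𝐡 F̃_{n+3}
    = F̆ₙ + i F̆_{n+1} + j F̆_{n+2} + k F̆_{n+3}`. -/
def Fhat (n : ℕ) : HQ := ⟨fq n, fq (n + 1), fq (n + 2), fq (n + 3)⟩
/-- The Lucas hybrid quaternion `L̂ₙ`. -/
def Lhat (n : ℕ) : HQ := ⟨lq n, lq (n + 1), lq (n + 2), lq (n + 3)⟩

/-- `α = (1 + √5)/2`. -/
def ga : ℝ := (1 + Real.sqrt 5) / 2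
/-- `β = (1 - √5)/2`. -/
def gb : ℝ := (1 - Real.sqrt 5) / 2

/-- `x* = 1 + 𝐢 x + ε x² + 𝐡 x³` (a hybrid number with real coefficients). -/
def hstar (x : ℝ) : HQ :=
  ⟨1, ⟨x, 0, 0, 0⟩, ⟨x ^ 2, 0, 0, 0⟩, ⟨x ^ 3, 0, 0, 0⟩⟩
/-- `x̲ = 1 + i x + j x² + k x³` (a quaternion with real coefficients). -/
def qund (x : ℝ) : HQ := eQ ⟨1, x, x ^ 2, x ^ 3⟩

/-- `F̂ₙ - i F̂_{n+1} - j F̂_{n+2} - k F̂_{n+3}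
  = F̆ₙ + F̆_{n+2} + F̆_{n+4} + F̆_{n+6} = L̆_{n+1} + L̆_{n+5}`. -/


private lemma Frec (m : ℕ) : F (m + 2) = F (m + 1) + F m := by
  simp [F, Nat.fib_add_two]; ring

private lemma lucas_eq : ∀ m : ℕ, lucas (m + 1) = F m + F (m + 2)
  | 0 => by norm_num [lucas, F]
  | 1 => by norm_num [lucas, F]
  | (m + 2) => by
      rw [show m + 2 + 1 = (m + 1) + 1 + 1 from rfl, lucas,
        lucas_eq (m + 1), lucas_eq m, Frec (m+2), Frec (m+1), Frec m]
      ring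

namespace Hybrid
variable {R : Type*} [Ring R] (x y : Hybrid R)
@[simp] lemma mul_re : (x * y).re =
    x.re * y.re - x.imI * y.imI + x.imI * y.imE + x.imE * y.imI + x.imH * y.imH := rfl
@[simp] lemma mul_imI : (x * y).imI =
    x.re * y.imI + x.imI * y.re + x.imI * y.imH - x.imH * y.imI := rfl
@[simp] lemma mul_imE : (x * y).imE =
    x.re * y.imE + x.imE * y.re + x.imI * y.imH - x.imH * y.imI
      + x.imH * y.imE - x.imE * y.imH := rfl
@[simp] lemma mul_imH : (x * y).imH =
    x.re * y.imH + x.imH * y.re + x.imE * y.imI - x.imI * y.imE := rfl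
@[simp] lemma sub_re : (x - y).re = x.re - y.re := rfl
@[simp] lemma sub_imI : (x - y).imI = x.imI - y.imI := rfl
@[simp] lemma sub_imE : (x - y).imE = x.imE - y.imE := rfl
@[simp] lemma sub_imH : (x - y).imH = x.imH - y.imH := rfl
@[simp] lemma add_re : (x + y).re = x.re + y.re := rfl
@[simp] lemma add_imI : (x + y).imI = x.imI + y.imI := rfl
@[simp] lemma add_imE : (x + y).imE = x.imE + y.imE := rfl
@[simp] lemma add_imH : (x + y).imH = x.imH + y.imH := rfl
end Hybrid

section PortHelpers
variable (m : ℕ) (z : Hybrid ℝ)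
@[simp] lemma fq_re' : (fq m).re = F m := rfl
@[simp] lemma fq_imI' : (fq m).imI = F (m + 1) := rfl
@[simp] lemma fq_imJ' : (fq m).imJ = F (m + 2) := rfl
@[simp] lemma fq_imK' : (fq m).imK = F (m + 3) := rfl
@[simp] lemma Fhat_re' : (Fhat m).re = fq m := rfl
@[simp] lemma Fhat_imI' : (Fhat m).imI = fq (m + 1) := rfl
@[simp] lemma Fhat_imE' : (Fhat m).imE = fq (m + 2) := rfl
@[simp] lemma Fhat_imH' : (Fhat m).imH = fq (m + 3) := rfl
@[simp] lemma eH_re' : (eH z).re = ((z.re : ℝ) : ℍ[ℝ]) := rfl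
@[simp] lemma eH_imI' : (eH z).imI = ((z.imI : ℝ) : ℍ[ℝ]) := rfl
@[simp] lemma eH_imE' : (eH z).imE = ((z.imE : ℝ) : ℍ[ℝ]) := rfl
@[simp] lemma eH_imH' : (eH z).imH = ((z.imH : ℝ) : ℍ[ℝ]) := rfl
@[simp] lemma q_im' : qi.imI = 0 ∧ qi.imE = 0 ∧ qi.imH = 0 ∧ qj.imI = 0 ∧ qj.imE = 0 ∧
    qj.imH = 0 ∧ qk.imI = 0 ∧ qk.imE = 0 ∧ qk.imH = 0 := ⟨rfl, rfl, rfl, rfl, rfl, rfl, rfl, rfl, rfl⟩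
@[simp] lemma qi_re' : qi.re.re = 0 ∧ qi.re.imI = 1 ∧ qi.re.imJ = 0 ∧ qi.re.imK = 0 := ⟨rfl, rfl, rfl, rfl⟩
@[simp] lemma qj_re' : qj.re.re = 0 ∧ qj.re.imI = 0 ∧ qj.re.imJ = 1 ∧ qj.re.imK = 0 := ⟨rfl, rfl, rfl, rfl⟩
@[simp] lemma qk_re' : qk.re.re = 0 ∧ qk.re.imI = 0 ∧ qk.re.imJ = 0 ∧ qk.re.imK = 1 := ⟨rfl, rfl, rfl, rfl⟩
end PortHelpers

set_option maxHeartbeats 1000000 in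
theorem fib_hybrid_quaternion_identity (n : ℕ) (hn : 1 ≤ n) :
    Fhat n - qi * Fhat (n + 1) - qj * Fhat (n + 2) - qk * Fhat (n + 3) =
        eH (fh n + fh (n + 2) + fh (n + 4) + fh (n + 6)) ∧
      eH (fh n + fh (n + 2) + fh (n + 4) + fh (n + 6)) =
        eH (lh (n + 1) + lh (n + 5)) := by
  constructor
  · refine Hybrid.ext ?_ ?_ ?_ ?_ <;>
    · simp only [Hybrid.mul_re, Hybrid.mul_imI, Hybrid.mul_imE, Hybrid.mul_imH,
        Hybrid.sub_re, Hybrid.sub_imI, Hybrid.sub_imE, Hybrid.sub_imH,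
        Hybrid.add_re, Hybrid.add_imI, Hybrid.add_imE, Hybrid.add_imH,
        Fhat_re', Fhat_imI', Fhat_imE', Fhat_imH', q_im', eH_re', eH_imI', eH_imE', eH_imH', fh]
      ext <;> simp [Frec] <;> ring
  · refine Hybrid.ext ?_ ?_ ?_ ?_ <;>
    · simp only [Hybrid.add_re, Hybrid.add_imI, Hybrid.add_imE, Hybrid.add_imH,
        eH_re', eH_imI', eH_imE', eH_imH', fh, lh, lucas_eq]
      ext <;> simp [Frec] <;> ring
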